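/- (Aleksandrov's theorem) Let f : ℝ^n → ℝ be a convex function. Then f is twice differentiable almost everywhere: for Lebesgue-a.e. x ∈ ℝ^n there exist a vector v ∈ ℝ^n and a symmetric n×n matrix A such that f(y) = f(x) + ⟨v, y − x⟩ + (1/2)⟨A(y − x), y − x⟩ + o(‖y − x‖²) as y → x. -/

import Mathlib

open MeasureTheory Metric Set Asymptotics
open scoped RealInnerProductSpace ENNReal Topology

noncomputable section

/-- Euclidean `n`-space. -/
abbrev Euc (n : ℕ) := EuclideanSpace ℝ (Fin n)

set_option maxHeartbeats 1000000

namespace Alek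
variable {n : ℕ} {f : Euc n → ℝ}

/-- subgradient set -/
def SG (f : Euc n → ℝ) (x : Euc n) : Set (Euc n) := {p | ∀ y, f x + ⟪p, y - x⟫ ≤ f y}

lemma cont (hf : ConvexOn ℝ univ f) : Continuous f := by
  rw [← continuousOn_univ]
  exact hf.continuousOn isOpen_univ

lemma sg_convex (x : Euc n) : Convex ℝ (SG f x) := by
  intro p hp q hq a b ha hb hab y
  have h1 := hp y
  have h2 := hq y
  have h3 : ⟪a • p + b • q, y - x⟫ = a * ⟪p, y - x⟫ + b * ⟪q, y - x⟫ := by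
    simp [inner_add_left, inner_smul_left]
  have h4 := add_le_add (mul_le_mul_of_nonneg_left h1 ha) (mul_le_mul_of_nonneg_left h2 hb)
  have h5 : a * f x + b * f x = f x := by rw [← add_mul, hab, one_mul]
  have h6 : a * f y + b * f y = f y := by rw [← add_mul, hab, one_mul]
  rw [h3]; nlinarith

lemma sg_nonempty (hf : ConvexOn ℝ univ f) (x : Euc n) : (SG f x).Nonempty := by
  classical
  set U : Set (Euc n × ℝ) := {p | f p.1 < p.2} with hU
  have hUconv : Convex ℝ U := by
    intro p hp q hq a b ha hb hab
    simp only [hU, mem_setOf_eq] at *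
    have key : f (a • p.1 + b • q.1) ≤ a * f p.1 + b * f q.1 :=
      hf.2 (mem_univ _) (mem_univ _) ha hb hab
    rcases eq_or_lt_of_le ha with h | h
    · have hb1 : b = 1 := by linarith
      simp only [← h, hb1, zero_smul, one_smul, zero_add, zero_mul, one_mul] at key ⊢
      exact lt_of_le_of_lt (by simpa using key) hq
    · rcases eq_or_lt_of_le hb with h' | h'
      · have ha1 : a = 1 := by linarith
        simp only [← h', ha1, zero_smul, one_smul, add_zero, zero_mul, one_mul] at key ⊢
        exact lt_of_le_of_lt (by simpa using key) hp
      · have : a * f p.1 + b * f q.1 < a * p.2 + b * q.2 := by nlinarith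
        exact lt_of_le_of_lt key this
  have hUopen : IsOpen U := by
    have : U = (fun p : Euc n × ℝ => p.2 - f p.1) ⁻¹' (Ioi 0) := by
      ext p; simp [hU, sub_pos]
    rw [this]
    exact IsOpen.preimage (continuous_snd.sub ((cont hf).comp continuous_fst)) isOpen_Ioi
  have hxU : (x, f x) ∉ U := by simp [hU]
  obtain ⟨l, hl⟩ := geometric_hahn_banach_open_point hUconv hUopen hxU
  -- l a < l (x, f x) for all a in U
  set c : ℝ := l (0, 1) with hc
  set φ : Euc n →L[ℝ] ℝ := l.comp (ContinuousLinearMap.inl ℝ (Euc n) ℝ) with hφ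
  have hφ0 : ∀ y : Euc n, φ y = l (y, 0) := by
    intro y; simp [hφ, ContinuousLinearMap.inl_apply]
  have hsplit : ∀ y t, l (y, t) = φ y + t * c := by
    intro y t
    have h1 : (y, t) = (y, (0:ℝ)) + t • ((0 : Euc n), (1:ℝ)) := by
      simp [Prod.ext_iff]
    rw [h1, l.map_add, l.map_smul, smul_eq_mul, hφ0, hc]
  have hkey : ∀ y t, f y < t → φ y + t * c < φ x + f x * c := by
    intro y t ht
    have := hl (y, t) (by simpa [hU] using ht)
    rwa [hsplit, hsplit] at this
  have hcneg : c < 0 := by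
    rcases lt_trichotomy c 0 with h | h | h
    · exact h
    · exfalso
      have := hkey x (f x + 1) (by linarith)
      rw [h] at this; simp at this
    · exfalso
      have h1 := hkey x (f x + 1) (by linarith)
      nlinarith
  -- limiting t → f y
  have hcpos : (0:ℝ) < -c := by linarith
  have hlim : ∀ y, φ y + f y * c ≤ φ x + f x * c := by
    intro y
    refine le_of_forall_pos_lt_add fun ε hε => ?_
    have h1 := hkey y (f y + ε / (-c)) (by have : 0 < ε / (-c) := div_pos hε hcpos; linarith)
    have hm : (ε / (-c)) * c = -ε := by field_simp; rw [div_self hcneg.ne]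
    nlinarith
  refine ⟨(-c)⁻¹ • ((InnerProductSpace.toDual ℝ (Euc n)).symm φ : Euc n), fun y => ?_⟩
  have hφy : ∀ u : Euc n, ⟪((InnerProductSpace.toDual ℝ (Euc n)).symm φ : Euc n), u⟫ = φ u := by
    intro u
    exact InnerProductSpace.toDual_symm_apply
  rw [inner_smul_left]
  rw [hφy]
  have hle := hlim y
  have hφsub : φ (y - x) = φ y - φ x := by rw [map_sub]
  rw [hφsub, RCLike.conj_to_real]
  have h9 : (-c)⁻¹ * (φ y - φ x) ≤ f y - f x := by
    rw [inv_mul_le_iff₀ hcpos]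
    nlinarith
  linarith


/-- monotonicity of the subgradient -/
lemma sg_mono {x y p q : Euc n} (hp : p ∈ SG f x) (hq : q ∈ SG f y) :
    0 ≤ ⟪p - q, x - y⟫ := by
  have h1 := hp y
  have h2 := hq x
  have e1 : ⟪p - q, x - y⟫ = ⟪p, x - y⟫ - ⟪q, x - y⟫ := inner_sub_left _ _ _
  have e2 : ⟪p, y - x⟫ = -⟪p, x - y⟫ := by rw [← inner_neg_right]; congr 1; abel
  have e3 : ⟪q, x - y⟫ = ⟪q, x - y⟫ := rfl
  rw [e2] at h1
  linarith

/-- Minty: I + ∂f is surjective. -/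
lemma minty (hf : ConvexOn ℝ univ f) (z : Euc n) : ∃ x : Euc n, z - x ∈ SG f x := by
  obtain ⟨q, hq⟩ := sg_nonempty hf z
  set h : Euc n → ℝ := fun u => f u + ‖u - z‖ ^ 2 / 2 with hh
  -- h attains min on closed ball of radius R = 2‖q‖+1 around z
  set R : ℝ := 2 * ‖q‖ + 1 with hR
  have hRpos : 0 < R := by positivity
  have hcomp : IsCompact (closedBall z R) := isCompact_closedBall z R
  have hcont : Continuous h := by
    have := cont hf
    fun_prop
  obtain ⟨x, hxball, hxmin⟩ :=
    hcomp.exists_isMinOn ⟨z, mem_closedBall_self hRpos.le⟩ hcont.continuousOn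
  -- global min
  have hglobal : ∀ u, h x ≤ h u := by
    intro u
    by_cases hu : u ∈ closedBall z R
    · exact hxmin hu
    · have hdist : R < ‖u - z‖ := by
        simpa [dist_eq_norm] using not_le.1 (fun hc => hu (by simpa [mem_closedBall, dist_eq_norm] using hc))
      have hlow : f z + ⟪q, u - z⟫ ≤ f u := hq u
      have hcs : -(‖q‖ * ‖u - z‖) ≤ ⟪q, u - z⟫ := by
        have := abs_real_inner_le_norm q (u - z)
        have := neg_abs_le (⟪q, u - z⟫)
        nlinarith [abs_real_inner_le_norm q (u - z)]
      have h1 : h z ≤ h u := by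
        have hz : h z = f z := by simp [hh]
        have : f z ≤ f u + ‖u - z‖ ^ 2 / 2 - 0 := by nlinarith [norm_nonneg (u-z), norm_nonneg q]
        simp [hh, hz]; nlinarith
      exact le_trans (hxmin (mem_closedBall_self hRpos.le)) h1
  -- subgradient condition
  refine ⟨x, fun y => ?_⟩
  by_cases hxy : y = x
  · simp [hxy]
  have key : ∀ t : ℝ, 0 < t → t ≤ 1 → f x + ⟪z - x, y - x⟫ - t * ‖y - x‖ ^ 2 / 2 ≤ f y := by
    intro t ht ht1
    set d := y - x with hd
    have hconv := hf.2 (mem_univ x) (mem_univ y) (by linarith : (0:ℝ) ≤ 1 - t) ht.le (by ring)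
    have hpt : (1 - t) • x + t • y = x + t • d := by
      simp [hd, smul_sub]; module
    rw [hpt] at hconv
    have hmin := hglobal (x + t • d)
    -- h x ≤ h (x + t d): f x + ‖x−z‖²/2 ≤ f(x+td) + ‖x+td−z‖²/2
    have hexp : ‖x + t • d - z‖ ^ 2 = ‖x - z‖ ^ 2 + 2 * t * ⟪x - z, d⟫ + t ^ 2 * ‖d‖ ^ 2 := by
      have : x + t • d - z = (x - z) + t • d := by abel
      rw [this, norm_add_sq_real, inner_smul_right, norm_smul]
      simp [mul_pow]
      ring
    have hfx : f x + ‖x - z‖^2/2 ≤ f (x + t • d) + ‖x + t • d - z‖^2/2 := hmin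
    have hineq : f x + t * (⟪z - x, d⟫) - t^2 * ‖d‖^2 / 2 ≤ f (x + t • d) := by
      have hzx : ⟪x - z, d⟫ = -⟪z - x, d⟫ := by
        rw [← inner_neg_left]; congr 1; abel
      rw [hexp] at hfx
      rw [hzx] at hfx
      nlinarith
    have hcc : f (x + t • d) ≤ (1 - t) * f x + t * f y := hconv
    have hmul : t * (f x + ⟪z - x, d⟫ - t * ‖d‖^2 / 2) ≤ t * f y := by nlinarith
    have := le_of_mul_le_mul_left hmul ht
    linarith
  -- let t → 0
  have hfinal : ∀ ε > (0:ℝ), f x + ⟪z - x, y - x⟫ < f y + ε := by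
    intro ε hε
    set D := ‖y - x‖ ^ 2 with hD
    have hDpos : 0 < D := by
      have h0 : 0 < ‖y - x‖ := norm_sub_pos_iff.mpr (Ne.symm (fun h => hxy h.symm))
      positivity
    set t := min 1 (ε / D) with ht
    have htpos : 0 < t := lt_min one_pos (by positivity)
    have ht1 : t ≤ 1 := min_le_left _ _
    have := key t htpos ht1
    have htD : t * D ≤ ε := by
      calc t * D ≤ (ε / D) * D := by
            apply mul_le_mul_of_nonneg_right (min_le_right _ _) hDpos.le
      _ = ε := by field_simp
    nlinarith
  by_contra hcon
  push_neg at hcon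
  have := hfinal ((f x + ⟪z - x, y - x⟫ - f y)/2) (by linarith)
  linarith

/-- uniqueness of the resolvent point -/
lemma minty_unique {z a b : Euc n} (ha : z - a ∈ SG f a) (hb : z - b ∈ SG f b) : a = b := by
  have := sg_mono ha hb
  have e : (z - a) - (z - b) = -(a - b) := by abel
  rw [e, inner_neg_left] at this
  have : ⟪a - b, a - b⟫ ≤ 0 := by linarith
  have h2 := real_inner_self_nonpos.1 this
  have : a - b = 0 := h2
  exact sub_eq_zero.1 this

/-- the proximal map -/
def P (hf : ConvexOn ℝ univ f) : Euc n → Euc n := fun z => Classical.choose (minty hf z)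

lemma P_spec (hf : ConvexOn ℝ univ f) (z : Euc n) : z - P hf z ∈ SG f (P hf z) :=
  Classical.choose_spec (minty hf z)

lemma P_eq (hf : ConvexOn ℝ univ f) {z x : Euc n} (hx : z - x ∈ SG f x) : P hf z = x :=
  minty_unique (P_spec hf z) hx

lemma P_lip (hf : ConvexOn ℝ univ f) : LipschitzWith 1 (P hf) := by
  rw [lipschitzWith_iff_dist_le_mul]
  intro z w
  simp only [NNReal.coe_one, one_mul, dist_eq_norm]
  set a := P hf z
  set b := P hf w
  have hmono := sg_mono (P_spec hf z) (P_spec hf w)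
  have e : (z - a) - (w - b) = (z - w) - (a - b) := by abel
  rw [e, inner_sub_left] at hmono
  have h1 : ⟪a - b, a - b⟫ ≤ ⟪z - w, a - b⟫ := by linarith
  have h2 : ‖a - b‖ ^ 2 ≤ ‖z - w‖ * ‖a - b‖ := by
    calc ‖a - b‖ ^ 2 = ⟪a - b, a - b⟫ := (real_inner_self_eq_norm_sq _).symm
    _ ≤ ⟪z - w, a - b⟫ := h1
    _ ≤ ‖z - w‖ * ‖a - b‖ := real_inner_le_norm _ _
  by_cases hab : a = b
  · simp [hab]
  · have h0 : 0 < ‖a - b‖ := norm_sub_pos_iff.mpr (fun h => hab (by rw [h]))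
    nlinarith

lemma P_surj (hf : ConvexOn ℝ univ f) (x : Euc n) : ∃ z, P hf z = x := by
  obtain ⟨q, hq⟩ := sg_nonempty hf x
  exact ⟨x + q, P_eq hf (by simpa using hq)⟩


lemma lip_null_image {g : Euc n → Euc n} (hg : LipschitzWith 1 g) {s : Set (Euc n)}
    (hs : volume s = 0) : volume (g '' s) = 0 := by
  refine le_antisymm ?_ zero_le
  have key : ∀ ε : ℝ≥0∞, ε ≠ 0 → volume (g '' s) ≤ ε := by
    intro ε hε
    obtain ⟨t, r, htc, hts, -, hcover, hsum⟩ :=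
      Besicovitch.exists_closedBall_covering_tsum_measure_le (volume : Measure (Euc n)) hε
        (fun _ => Ioi 0) s
        (fun x _ δ hδ => ⟨δ/2, ⟨by simpa using half_pos hδ, half_pos hδ, half_lt_self hδ⟩⟩)
    have himg : g '' s ⊆ ⋃ x ∈ t, closedBall (g x) (r x) := by
      refine (Set.image_mono hcover).trans ?_
      rw [Set.image_iUnion₂]
      refine Set.iUnion₂_mono fun x hx => ?_
      intro y hy
      obtain ⟨u, hu, rfl⟩ := hy
      rw [mem_closedBall]
      calc dist (g u) (g x) ≤ 1 * dist u x := hg.dist_le_mul u x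
      _ ≤ r x := by rw [one_mul]; exact mem_closedBall.1 hu
    calc volume (g '' s) ≤ ∑' x : t, volume (closedBall (g x) (r x)) := by
          have := measure_biUnion_le (volume : Measure (Euc n)) htc
            (fun x => closedBall (g x) (r x))
          exact (measure_mono himg).trans this
    _ = ∑' x : t, volume (closedBall (x : Euc n) (r x)) := by
          congr 1; funext x
          simp only [Measure.addHaar_closedBall_center]
    _ ≤ volume s + ε := hsum
    _ = ε := by rw [hs, zero_add]
  -- conclude
  refine ENNReal.le_of_forall_pos_le_add fun ε hε _ => ?_
  rw [zero_add]
  exact key ε (by exact_mod_cast hε.ne')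


lemma ae_good {g : Euc n → Euc n} (hg : LipschitzWith 1 g) (hsurj : ∀ x, ∃ z, g z = x) :
    ∀ᵐ x : Euc n, ∃ z, g z = x ∧ DifferentiableAt ℝ g z ∧ (fderiv ℝ g z).det ≠ 0 := by
  set D : Set (Euc n) := {z | ¬ DifferentiableAt ℝ g z} with hD
  set S : Set (Euc n) := {z | DifferentiableAt ℝ g z ∧ (fderiv ℝ g z).det = 0} with hS
  have hDnull : volume D = 0 := by
    have := hg.ae_differentiableAt (μ := (volume : Measure (Euc n)))
    simpa [hD, ae_iff] using this
  have hDimg : volume (g '' D) = 0 := lip_null_image hg hDnull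
  have hSmeas : MeasurableSet S := by
    have h1 : MeasurableSet {z | DifferentiableAt ℝ g z} := measurableSet_of_differentiableAt ℝ g
    have h2 : Measurable fun z => (fderiv ℝ g z).det :=
      ContinuousLinearMap.continuous_det.measurable.comp (measurable_fderiv ℝ g)
    exact h1.inter (h2 (measurableSet_singleton 0))
  have hSimg : volume (g '' S) = 0 := by
    have happ := addHaar_image_le_lintegral_abs_det_fderiv (volume : Measure (Euc n)) hSmeas
      (f' := fun z => fderiv ℝ g z) (fun z hz => (hz.1.hasFDerivAt).hasFDerivWithinAt)
    refine le_antisymm (happ.trans ?_) zero_le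
    have : ∀ z ∈ S, ENNReal.ofReal |(fderiv ℝ g z).det| = 0 := by
      intro z hz; rw [hz.2]; simp
    rw [setLIntegral_congr_fun hSmeas this]
    simp
  have hsub : {x : Euc n | ¬ ∃ z, g z = x ∧ DifferentiableAt ℝ g z ∧ (fderiv ℝ g z).det ≠ 0}
      ⊆ g '' D ∪ g '' S := by
    intro x hx
    simp only [mem_setOf_eq, not_exists] at hx
    obtain ⟨z, rfl⟩ := hsurj x
    by_cases hd : DifferentiableAt ℝ g z
    · by_cases hdet : (fderiv ℝ g z).det = 0
      · exact Or.inr ⟨z, ⟨hd, hdet⟩, rfl⟩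
      · exact absurd ⟨rfl, hd, hdet⟩ (hx z)
    · exact Or.inl ⟨z, hd, rfl⟩
  rw [ae_iff]
  exact measure_mono_null hsub (measure_union_null hDimg hSimg)


/-- local boundedness of subgradients -/
lemma sg_bound (hf : ConvexOn ℝ univ f) (x : Euc n) :
    ∃ L : ℝ, ∀ y q : Euc n, ‖y - x‖ ≤ 1 → q ∈ SG f y → ‖q‖ ≤ L := by
  obtain ⟨M₁, hM₁⟩ := (isCompact_closedBall x 2).exists_bound_of_continuousOn
    (cont hf).continuousOn
  obtain ⟨v, hv⟩ := sg_nonempty hf x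
  refine ⟨M₁ + ‖v‖ - f x, fun y q hy hq => ?_⟩
  by_cases hq0 : q = 0
  · rw [hq0, norm_zero]
    have h1 : f x ≤ |f x| := le_abs_self _
    have h2 : |f x| ≤ M₁ := hM₁ x (mem_closedBall_self (by norm_num))
    have : (0:ℝ) ≤ ‖v‖ := norm_nonneg v
    linarith
  · set u := y + ‖q‖⁻¹ • q with hu
    have hqn : (0:ℝ) < ‖q‖ := norm_pos_iff.2 hq0
    have huball : u ∈ closedBall x 2 := by
      rw [mem_closedBall, dist_eq_norm]
      have : u - x = (y - x) + ‖q‖⁻¹ • q := by rw [hu]; abel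
      rw [this]
      calc ‖(y - x) + ‖q‖⁻¹ • q‖ ≤ ‖y - x‖ + ‖‖q‖⁻¹ • q‖ := norm_add_le _ _
      _ ≤ 1 + 1 := by
          gcongr
          rw [norm_smul, norm_inv, norm_norm, inv_mul_cancel₀ hqn.ne']
      _ = 2 := by norm_num
    have hsub := hq u
    have hinner : ⟪q, u - y⟫ = ‖q‖ := by
      rw [hu]
      simp only [add_sub_cancel_left]
      rw [real_inner_smul_right, real_inner_self_eq_norm_sq]
      field_simp
    rw [hinner] at hsub
    -- f y ≥ f x + ⟪v, y - x⟫ ≥ f x - ‖v‖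
    have hlow : f x - ‖v‖ ≤ f y := by
      have := hv y
      have hcs : -(‖v‖ * ‖y - x‖) ≤ ⟪v, y - x⟫ := by
        nlinarith [abs_real_inner_le_norm v (y - x), neg_abs_le (⟪v, y - x⟫)]
      nlinarith [norm_nonneg v]
    have hup : f u ≤ M₁ := (le_abs_self _).trans (hM₁ u huball)
    linarith

/-- closedness of the subgradient graph under limits along subsequences,
    packaged as: upper semicontinuity when `SG f x = {v}`. -/
lemma sg_usc (hf : ConvexOn ℝ univ f) {x v : Euc n} (hsing : SG f x = {v}) :
    ∀ ε > (0:ℝ), ∃ δ > (0:ℝ), ∀ y q : Euc n, ‖y - x‖ < δ → q ∈ SG f y → ‖q - v‖ < ε := by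
  intro ε hε
  by_contra hcon
  push_neg at hcon
  have hseq : ∀ k : ℕ, ∃ yq : Euc n × Euc n, ‖yq.1 - x‖ < 1/(k+1) ∧ yq.2 ∈ SG f yq.1 ∧
      ε ≤ ‖yq.2 - v‖ := by
    intro k
    obtain ⟨y, q, h1, h2, h3⟩ := hcon (1/(k+1)) (by positivity)
    exact ⟨(y, q), h1, h2, h3⟩
  choose yq hy hq hqv using hseq
  obtain ⟨L, hL⟩ := sg_bound hf x
  have hbdd : ∀ k, (yq k).2 ∈ closedBall (0 : Euc n) L := by
    intro k
    rw [mem_closedBall, dist_zero_right]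
    refine hL _ _ ?_ (hq k)
    have : 1/((k:ℝ)+1) ≤ 1 := by
      rw [div_le_one (by positivity)]; linarith [Nat.cast_nonneg (α := ℝ) k]
    linarith [hy k]
  obtain ⟨qoo, -, φ, hφ, hconv⟩ := (isCompact_closedBall (0:Euc n) L).tendsto_subseq hbdd
  have hyx : Filter.Tendsto (fun k => (yq (φ k)).1) Filter.atTop (𝓝 x) := by
    rw [tendsto_iff_norm_sub_tendsto_zero]
    have h0 : Filter.Tendsto (fun k : ℕ => 1/((k:ℝ)+1)) Filter.atTop (𝓝 0) :=
      tendsto_one_div_add_atTop_nhds_zero_nat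
    refine squeeze_zero (fun k => norm_nonneg _) (fun k => (hy (φ k)).le) ?_
    exact h0.comp (hφ.tendsto_atTop)
  have hmem : qoo ∈ SG f x := by
    intro u
    have hle : ∀ k, f (yq (φ k)).1 + ⟪(yq (φ k)).2, u - (yq (φ k)).1⟫ ≤ f u :=
      fun k => hq (φ k) u
    have htend : Filter.Tendsto
        (fun k => f (yq (φ k)).1 + ⟪(yq (φ k)).2, u - (yq (φ k)).1⟫)
        Filter.atTop (𝓝 (f x + ⟪qoo, u - x⟫)) := by
      apply Filter.Tendsto.add
      · exact ((cont hf).tendsto x).comp hyx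
      · have h1 : Filter.Tendsto (fun k => (u - (yq (φ k)).1)) Filter.atTop (𝓝 (u - x)) :=
          tendsto_const_nhds.sub hyx
        exact (Filter.Tendsto.inner (𝕜 := ℝ) hconv h1)
    exact le_of_tendsto htend (Filter.Eventually.of_forall hle)
  rw [hsing, mem_singleton_iff] at hmem
  have : Filter.Tendsto (fun k => ‖(yq (φ k)).2 - v‖) Filter.atTop (𝓝 ‖qoo - v‖) :=
    ((hconv.sub tendsto_const_nhds).norm)
  have hεle : ε ≤ ‖qoo - v‖ :=
    le_of_tendsto_of_tendsto tendsto_const_nhds this (Filter.Eventually.of_forall fun k => hqv (φ k))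
  rw [hmem] at hεle
  simp at hεle
  linarith


/-- At a point where `P` has an invertible derivative, the subgradient at `P z₀` is unique. -/
lemma sg_singleton {P : Euc n → Euc n} {z₀ x v : Euc n} {B : Euc n →L[ℝ] Euc n}
    (hPeq : ∀ z y : Euc n, z - y ∈ SG f y → P z = y)
    (hB : HasFDerivAt P B z₀) (hBinj : ∀ w, B w = 0 → w = 0)
    (hxz : z₀ = x + v) (hv : v ∈ SG f x) :
    SG f x = {v} := by
  refine Set.eq_singleton_iff_unique_mem.2 ⟨hv, fun v' hv' => ?_⟩
  set w := v' - v with hw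
  suffices hws : w = 0 by
    rw [hw] at hws; exact sub_eq_zero.1 hws
  refine hBinj w ?_
  -- P is constant = x along z₀ + t • w for t ∈ [0,1]
  have hconst : ∀ t ∈ Icc (0:ℝ) 1, P (z₀ + t • w) = x := by
    intro t ⟨ht0, ht1⟩
    refine hPeq _ _ ?_
    have : z₀ + t • w - x = (1 - t) • v + t • v' := by
      rw [hxz, hw]; module
    rw [this]
    exact sg_convex x hv hv' (by linarith) ht0 (by ring)
  have hline : HasDerivAt (fun t : ℝ => z₀ + t • w) w 0 := by
    simpa using ((hasDerivAt_id (0:ℝ)).smul_const w).const_add z₀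
  have hB' : HasFDerivAt P B (z₀ + (0:ℝ) • w) := by
    rw [zero_smul, add_zero]; exact hB
  have hcomp : HasDerivAt (fun t : ℝ => P (z₀ + t • w)) (B w) (0:ℝ) := by
    exact hB'.comp_hasDerivAt (0:ℝ) hline
  have h1 : HasDerivWithinAt (fun t : ℝ => P (z₀ + t • w)) (B w) (Icc (0:ℝ) 1) (0:ℝ) :=
    hcomp.hasDerivWithinAt
  have h2 : HasDerivWithinAt (fun _ : ℝ => x) (B w) (Icc (0:ℝ) 1) (0:ℝ) := by
    refine h1.congr (fun t ht => (hconst t ht).symm) ?_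
    exact (hconst 0 ⟨le_refl 0, zero_le_one⟩).symm
  have h3 : HasDerivWithinAt (fun _ : ℝ => x) 0 (Icc (0:ℝ) 1) (0:ℝ) :=
    (hasDerivWithinAt_const 0 _ x)
  have huniq : UniqueDiffWithinAt ℝ (Icc (0:ℝ) 1) 0 :=
    uniqueDiffOn_Icc zero_lt_one 0 ⟨le_refl 0, zero_le_one⟩
  exact huniq.eq_deriv _ h2 h3


lemma grad_expand (hf : ConvexOn ℝ univ f) {P : Euc n → Euc n} {z₀ x v : Euc n}
    {Beq : Euc n ≃L[ℝ] Euc n} {M : Euc n →L[ℝ] Euc n}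
    (hPeq : ∀ z y : Euc n, z - y ∈ SG f y → P z = y)
    (hB : HasFDerivAt P (Beq : Euc n →L[ℝ] Euc n) z₀)
    (hxz : z₀ = x + v) (hsing : SG f x = {v})
    (hM : ∀ u, M u = Beq.symm u - u) :
    ∀ ε > (0:ℝ), ∃ δ > (0:ℝ), ∀ y q : Euc n, ‖y - x‖ < δ → q ∈ SG f y →
      ‖q - v - M (y - x)‖ ≤ ε * ‖y - x‖ := by
  intro ε hε
  set c : ℝ := ‖(Beq.symm : Euc n →L[ℝ] Euc n)‖ + 1 with hc
  have hcpos : 0 < c := by positivity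
  have hcnorm : ‖(Beq.symm : Euc n →L[ℝ] Euc n)‖ ≤ c := by rw [hc]; linarith
  set ε' : ℝ := min (1/(2*c)) (ε/(2*c^2)) with hε'
  have hε'pos : 0 < ε' := lt_min (by positivity) (by positivity)
  -- extract δ₁ from differentiability
  have hlo := hB.isLittleO
  rw [isLittleO_iff] at hlo
  have hev := hlo hε'pos
  rw [Metric.eventually_nhds_iff] at hev
  obtain ⟨δ₁, hδ₁pos, hδ₁⟩ := hev
  -- extract δ₂ from semicontinuity
  obtain ⟨δ₂, hδ₂pos, hδ₂⟩ := sg_usc hf hsing (δ₁/2) (by positivity)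
  refine ⟨min δ₂ (δ₁/2), lt_min hδ₂pos (by positivity), fun y q hy hq => ?_⟩
  have hPx : P z₀ = x := hPeq z₀ x (by rw [hxz]; simpa using (hsing ▸ rfl : v ∈ SG f x))
  set ζ : Euc n := (y - x) + (q - v) with hζ
  have hyx : ‖y - x‖ < δ₁/2 := lt_of_lt_of_le hy (min_le_right _ _)
  have hqv : ‖q - v‖ < δ₁/2 := hδ₂ y q (lt_of_lt_of_le hy (min_le_left _ _)) hq
  have hζnorm : ‖ζ‖ < δ₁ := by
    calc ‖ζ‖ ≤ ‖y - x‖ + ‖q - v‖ := norm_add_le _ _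
    _ < δ₁/2 + δ₁/2 := by linarith
    _ = δ₁ := by ring
  set z : Euc n := y + q with hz
  have hzz : z - z₀ = ζ := by rw [hz, hxz, hζ]; abel
  have hPz : P z = y := hPeq z y (by simpa [hz] using hq)
  have hdist : dist z z₀ < δ₁ := by rw [dist_eq_norm, hzz]; exact hζnorm
  have hkey := hδ₁ hdist
  simp only [hPz, hPx, hzz] at hkey
  -- hkey : ‖y - x - Beq ζ‖ ≤ ε' * ‖ζ‖
  have hstep1 : ‖ζ - Beq.symm (y - x)‖ ≤ c * ε' * ‖ζ‖ := by
    have he : Beq.symm (Beq ζ - (y - x)) = ζ - Beq.symm (y - x) := by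
      rw [map_sub, Beq.symm_apply_apply]
    rw [← he]
    calc ‖Beq.symm (Beq ζ - (y - x))‖
        ≤ ‖(Beq.symm : Euc n →L[ℝ] Euc n)‖ * ‖Beq ζ - (y - x)‖ :=
          (Beq.symm : Euc n →L[ℝ] Euc n).le_opNorm _
    _ ≤ c * (ε' * ‖ζ‖) := by
        refine mul_le_mul hcnorm ?_ (norm_nonneg _) hcpos.le
        rw [← norm_neg]
        simpa [neg_sub] using hkey
    _ = c * ε' * ‖ζ‖ := by ring
  have hζbound : ‖ζ‖ ≤ 2 * c * ‖y - x‖ := by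
    have h1 : ‖ζ‖ ≤ ‖Beq.symm (y - x)‖ + c * ε' * ‖ζ‖ := by
      calc ‖ζ‖ = ‖Beq.symm (y - x) + (ζ - Beq.symm (y - x))‖ := by congr 1; abel
      _ ≤ ‖Beq.symm (y - x)‖ + ‖ζ - Beq.symm (y - x)‖ := norm_add_le _ _
      _ ≤ ‖Beq.symm (y - x)‖ + c * ε' * ‖ζ‖ := by linarith
    have h2 : ‖Beq.symm (y - x)‖ ≤ c * ‖y - x‖ := by
      calc ‖Beq.symm (y - x)‖ ≤ ‖(Beq.symm : Euc n →L[ℝ] Euc n)‖ * ‖y - x‖ :=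
            (Beq.symm : Euc n →L[ℝ] Euc n).le_opNorm _
      _ ≤ c * ‖y - x‖ := mul_le_mul_of_nonneg_right hcnorm (norm_nonneg _)
    have h3 : c * ε' ≤ 1/2 := by
      have : ε' ≤ 1/(2*c) := min_le_left _ _
      calc c * ε' ≤ c * (1/(2*c)) := mul_le_mul_of_nonneg_left this hcpos.le
      _ = 1/2 := by field_simp
    nlinarith [norm_nonneg ζ, norm_nonneg (y - x),
      mul_le_mul_of_nonneg_right h3 (norm_nonneg ζ)]
  have hfin : q - v - M (y - x) = ζ - Beq.symm (y - x) := by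
    rw [hM, hζ]; abel
  rw [hfin]
  calc ‖ζ - Beq.symm (y - x)‖ ≤ c * ε' * ‖ζ‖ := hstep1
  _ ≤ c * ε' * (2 * c * ‖y - x‖) := by
      refine mul_le_mul_of_nonneg_left hζbound (by positivity)
  _ = (2 * c^2 * ε') * ‖y - x‖ := by ring
  _ ≤ ε * ‖y - x‖ := by
      refine mul_le_mul_of_nonneg_right ?_ (norm_nonneg _)
      have : ε' ≤ ε/(2*c^2) := min_le_right _ _
      calc 2 * c^2 * ε' ≤ 2 * c^2 * (ε/(2*c^2)) := by
            refine mul_le_mul_of_nonneg_left this (by positivity)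
      _ = ε := by field_simp


lemma gauss (N : ℕ) : (∑ i ∈ Finset.range N, (i:ℝ)) = N*(N-1)/2 := by
  induction N with
  | zero => simp
  | succ k ih => rw [Finset.sum_range_succ, ih]; push_cast; ring

lemma taylor_expand (hf : ConvexOn ℝ univ f) {x v : Euc n} {M : Euc n →L[ℝ] Euc n}
    (hv : v ∈ SG f x)
    (hgrad : ∀ ε > (0:ℝ), ∃ δ > (0:ℝ), ∀ y q : Euc n, ‖y - x‖ < δ → q ∈ SG f y →
      ‖q - v - M (y - x)‖ ≤ ε * ‖y - x‖) :
    ∀ ε > (0:ℝ), ∃ δ > (0:ℝ), ∀ y : Euc n, ‖y - x‖ < δ →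
      |f y - f x - ⟪v, y - x⟫ - (1/2) * ⟪M (y - x), y - x⟫| ≤ ε * ‖y - x‖^2 := by
  intro ε hε
  obtain ⟨δ, hδpos, hδ⟩ := hgrad ε hε
  refine ⟨δ, hδpos, fun y hy => ?_⟩
  by_cases hyx : y = x
  · simp [hyx]
  set d : Euc n := y - x with hd
  set Q : ℝ := ⟪M d, d⟫ with hQ
  set E : ℝ := ε * ‖d‖^2 with hE
  set T : ℝ := f y - f x - ⟪v, d⟫ - (1/2) * Q with hT
  clear_value d Q E T
  have hEnn : 0 ≤ E := by rw [hE]; positivity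
  -- main bound for each N ≥ 1
  have hmain : ∀ N : ℕ, 1 ≤ N → |T| ≤ E + |Q|/(2*N) := by
    intro N hN1
    have hNR : (0:ℝ) < N := by exact_mod_cast hN1
    set u : ℕ → Euc n := fun i => x + ((i:ℝ)/(N:ℝ)) • d with hu
    have hq : ∀ i, (sg_nonempty hf (u i)).choose ∈ SG f (u i) :=
      fun i => (sg_nonempty hf (u i)).choose_spec
    set q : ℕ → Euc n := fun i => (sg_nonempty hf (u i)).choose with hqdef
    -- basic facts
    have hu0 : u 0 = x := by simp [hu]
    have huN : u N = y := by
      rw [hu]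
      simp only [div_self hNR.ne', one_smul]
      rw [hd]; abel
    have hux : ∀ i, u i - x = ((i:ℝ)/(N:ℝ)) • d := fun i => by
      show x + ((i:ℝ)/(N:ℝ)) • d - x = ((i:ℝ)/(N:ℝ)) • d
      abel
    have hunorm : ∀ i, i ≤ N → ‖u i - x‖ ≤ ‖d‖ := by
      intro i hi
      rw [hux, norm_smul]
      have h1 : |((i:ℝ)/(N:ℝ))| ≤ 1 := by
        rw [abs_div, abs_of_nonneg (Nat.cast_nonneg i), abs_of_pos hNR,
          div_le_one hNR]
        exact_mod_cast hi
      calc |((i:ℝ)/(N:ℝ))| * ‖d‖ ≤ 1 * ‖d‖ :=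
            mul_le_mul_of_nonneg_right h1 (norm_nonneg d)
      _ = ‖d‖ := one_mul _
    -- per-index inner product bound
    have hr : ∀ i, i ≤ N → |⟪q i, d⟫ - ⟪v, d⟫ - ((i:ℝ)/(N:ℝ)) * Q| ≤ E := by
      intro i hi
      have h1 : ‖q i - v - M (u i - x)‖ ≤ ε * ‖u i - x‖ :=
        hδ (u i) (q i) (lt_of_le_of_lt (hunorm i hi) hy) (hq i)
      have h2 : ⟪q i - v - M (u i - x), d⟫ = ⟪q i, d⟫ - ⟪v, d⟫ - ((i:ℝ)/(N:ℝ)) * Q := by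
        rw [inner_sub_left, inner_sub_left, hux, M.map_smul, real_inner_smul_left, hQ]
      rw [← h2]
      calc |⟪q i - v - M (u i - x), d⟫| ≤ ‖q i - v - M (u i - x)‖ * ‖d‖ :=
            abs_real_inner_le_norm _ _
      _ ≤ (ε * ‖u i - x‖) * ‖d‖ := mul_le_mul_of_nonneg_right h1 (norm_nonneg d)
      _ ≤ (ε * ‖d‖) * ‖d‖ := by
            refine mul_le_mul_of_nonneg_right ?_ (norm_nonneg d)
            exact mul_le_mul_of_nonneg_left (hunorm i hi) hε.le
      _ = E := by rw [hE]; ring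
    -- step inequalities
    have hstep_diff : ∀ i : ℕ, u (i+1) - u i = ((1:ℝ)/(N:ℝ)) • d := by
      intro i
      rw [hu]
      simp only
      rw [add_sub_add_left_eq_sub, ← sub_smul]
      congr 1
      push_cast
      field_simp
      ring
    have hlow : ∀ i ∈ Finset.range N, ((1:ℝ)/(N:ℝ)) * ⟪q i, d⟫ ≤ f (u (i+1)) - f (u i) := by
      intro i _
      have := hq i (u (i+1))
      rw [show u (i+1) - u i = ((1:ℝ)/(N:ℝ)) • d from hstep_diff i,
        real_inner_smul_right] at this
      linarith
    have hhigh : ∀ i ∈ Finset.range N, f (u (i+1)) - f (u i) ≤ ((1:ℝ)/(N:ℝ)) * ⟪q (i+1), d⟫ := by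
      intro i _
      have := hq (i+1) (u i)
      have he : u i - u (i+1) = -(((1:ℝ)/(N:ℝ)) • d) := by rw [← hstep_diff i]; abel
      rw [he, inner_neg_right, real_inner_smul_right] at this
      linarith
    -- telescoping
    have htel : (∑ i ∈ Finset.range N, (f (u (i+1)) - f (u i))) = f y - f x := by
      rw [Finset.sum_range_sub (fun i => f (u i)), hu0, huN]
    -- sum evaluation helper
    have hsum_eval : ∀ s : ℕ → ℝ, (∀ i ∈ Finset.range N, ∃ c : ℝ, s i = c) → True := fun _ _ => trivial
    have hgauss1 : (∑ i ∈ Finset.range N, ((1:ℝ)/(N:ℝ)) * (⟪v,d⟫ + ((i:ℝ)/(N:ℝ)) * Q - E))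
        = ⟪v,d⟫ - E + Q*((N:ℝ)-1)/(2*N) := by
      have hc : ∀ i ∈ Finset.range N,
          ((1:ℝ)/(N:ℝ)) * (⟪v,d⟫ + ((i:ℝ)/(N:ℝ)) * Q - E)
          = (⟪v,d⟫ - E)/(N:ℝ) + (Q/(N:ℝ)^2) * (i:ℝ) := by
        intro i _; field_simp; ring
      rw [Finset.sum_congr rfl hc, Finset.sum_add_distrib, Finset.sum_const,
        Finset.card_range, ← Finset.mul_sum, gauss]
      have hN0 : (N:ℝ) ≠ 0 := hNR.ne'
      field_simp
      ring_nf
      field_simp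
      ring
    have hgauss2 : (∑ i ∈ Finset.range N, ((1:ℝ)/(N:ℝ)) * (⟪v,d⟫ + (((i:ℝ)+1)/(N:ℝ)) * Q + E))
        = ⟪v,d⟫ + E + Q*((N:ℝ)+1)/(2*N) := by
      have hc : ∀ i ∈ Finset.range N,
          ((1:ℝ)/(N:ℝ)) * (⟪v,d⟫ + (((i:ℝ)+1)/(N:ℝ)) * Q + E)
          = ((⟪v,d⟫ + E)/(N:ℝ) + Q/(N:ℝ)^2) + (Q/(N:ℝ)^2) * (i:ℝ) := by
        intro i _; field_simp; ring
      rw [Finset.sum_congr rfl hc, Finset.sum_add_distrib, Finset.sum_const,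
        Finset.card_range, ← Finset.mul_sum, gauss]
      have hN0 : (N:ℝ) ≠ 0 := hNR.ne'
      field_simp
      ring_nf
      field_simp
      ring
    -- lower bound
    have hlb : ⟪v,d⟫ - E + Q*((N:ℝ)-1)/(2*N) ≤ f y - f x := by
      rw [← hgauss1, ← htel]
      refine Finset.sum_le_sum fun i hi => ?_
      refine le_trans ?_ (hlow i hi)
      refine mul_le_mul_of_nonneg_left ?_ (by positivity)
      have := hr i (le_of_lt (Finset.mem_range.1 hi))
      have h1 := abs_le.1 this
      linarith [h1.1]
    -- upper bound
    have hub : f y - f x ≤ ⟪v,d⟫ + E + Q*((N:ℝ)+1)/(2*N) := by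
      rw [← hgauss2, ← htel]
      refine Finset.sum_le_sum fun i hi => ?_
      refine le_trans (hhigh i hi) ?_
      refine mul_le_mul_of_nonneg_left ?_ (by positivity)
      have hile : i + 1 ≤ N := Finset.mem_range.1 hi
      have := hr (i+1) hile
      have h1 := abs_le.1 this
      have hcast : (((i+1:ℕ)):ℝ) = (i:ℝ) + 1 := by push_cast; ring
      rw [hcast] at h1
      linarith [h1.2]
    -- combine
    have e1 : Q*((N:ℝ)+1)/(2*N) - Q/2 = Q/(2*N) := by field_simp; ring
    have e2 : Q*((N:ℝ)-1)/(2*N) - Q/2 = -(Q/(2*N)) := by field_simp; ring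
    have h3 : Q ≤ |Q| := le_abs_self Q
    have h4 : -|Q| ≤ Q := neg_abs_le Q
    have h5 : Q/(2*(N:ℝ)) ≤ |Q|/(2*N) := by gcongr
    have h6 : -(|Q|/(2*(N:ℝ))) ≤ -(Q/(2*N)) := by
      have : -|Q|/(2*(N:ℝ)) ≤ Q/(2*N) := by gcongr
      have he : -|Q|/(2*(N:ℝ)) = -(|Q|/(2*N)) := by ring
      linarith [he ▸ this]
    rw [abs_le]
    constructor
    · have : -(Q/(2*(N:ℝ))) - E ≤ T := by rw [hT]; linarith [hlb, e2]
      linarith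
    · have : T ≤ Q/(2*(N:ℝ)) + E := by rw [hT]; linarith [hub, e1]
      linarith
  -- let N → ∞
  have hfinal : |T| ≤ E := by
    refine le_of_forall_pos_le_add fun η hη => ?_
    obtain ⟨N₀, hN₀⟩ := exists_nat_gt (|Q|/(2*η))
    have hN1 : 1 ≤ N₀ + 1 := Nat.le_add_left 1 N₀
    have h1 := hmain (N₀+1) hN1
    have hNpos : (0:ℝ) < (N₀:ℝ)+1 := by positivity
    have h2 : |Q|/(2*((N₀:ℝ)+1)) < η := by
      rw [div_lt_iff₀ (by positivity)]
      have h3 : |Q|/(2*η) < (N₀:ℝ)+1 := lt_of_lt_of_le hN₀ (by linarith)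
      rw [div_lt_iff₀ (by positivity)] at h3
      linarith
    have hcast : ((N₀+1:ℕ):ℝ) = (N₀:ℝ)+1 := by push_cast; ring
    rw [hcast] at h1
    linarith
  exact hfinal


end Alek


/-- **Aleksandrov's theorem** (Theorem 2.13): a convex function on `ℝ^n` is twice
differentiable at Lebesgue-almost every point, in the sense of a second-order
Taylor expansion with a symmetric Hessian. -/
theorem aleksandrov_twice_differentiable_ae
    (n : ℕ) (f : Euc n → ℝ) (hf : ConvexOn ℝ Set.univ f) :
    ∀ᵐ x : Euc n, ∃ (v : Euc n) (A : Euc n →L[ℝ] Euc n),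
      (∀ w z : Euc n, ⟪A w, z⟫ = ⟪w, A z⟫) ∧
      (fun y => f y - f x - ⟪v, y - x⟫ - (1 / 2) * ⟪A (y - x), y - x⟫)
        =o[𝓝 x] fun y => ‖y - x‖ ^ 2 := by
  classical
  have hae := Alek.ae_good (Alek.P_lip hf) (Alek.P_surj hf)
  filter_upwards [hae] with x hx
  obtain ⟨z, hPz, hdiff, hdet⟩ := hx
  set B : Euc n →L[ℝ] Euc n := fderiv ℝ (Alek.P hf) z with hBdef
  have hB : HasFDerivAt (Alek.P hf) B z := hdiff.hasFDerivAt
  set v : Euc n := z - x with hvdef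
  have hv : v ∈ Alek.SG f x := by
    rw [hvdef, ← hPz]; exact Alek.P_spec hf z
  have hxz : z = x + v := by rw [hvdef]; abel
  have hdet' : LinearMap.det (B : Euc n →ₗ[ℝ] Euc n) ≠ 0 := hdet
  set Beq : Euc n ≃L[ℝ] Euc n :=
    (LinearMap.equivOfDetNeZero (B : Euc n →ₗ[ℝ] Euc n) hdet').toContinuousLinearEquiv with hBeqdef
  have hBeq : ∀ u, Beq u = B u := fun u => rfl
  have hBeqc : (Beq : Euc n →L[ℝ] Euc n) = B := ContinuousLinearMap.ext hBeq
  have hBinj : ∀ w, B w = 0 → w = 0 := by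
    intro w hw
    have : Beq w = 0 := by rw [hBeq]; exact hw
    calc w = Beq.symm (Beq w) := (Beq.symm_apply_apply w).symm
    _ = Beq.symm 0 := by rw [this]
    _ = 0 := map_zero _
  have hPeq : ∀ z y : Euc n, z - y ∈ Alek.SG f y → Alek.P hf z = y :=
    fun z y h => Alek.P_eq hf h
  have hsing : Alek.SG f x = {v} := Alek.sg_singleton hPeq hB hBinj hxz hv
  have hB' : HasFDerivAt (Alek.P hf) (Beq : Euc n →L[ℝ] Euc n) z := by rw [hBeqc]; exact hB
  set M : Euc n →L[ℝ] Euc n :=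
    (Beq.symm : Euc n →L[ℝ] Euc n) - ContinuousLinearMap.id ℝ (Euc n) with hMdef
  have hM : ∀ u, M u = Beq.symm u - u := fun u => rfl
  have hgrad := Alek.grad_expand hf hPeq hB' hxz hsing hM
  have htay := Alek.taylor_expand hf hv hgrad
  set A : Euc n →L[ℝ] Euc n :=
    (2⁻¹ : ℝ) • (M + ContinuousLinearMap.adjoint M) with hAdef
  have hsym : ∀ w u : Euc n, ⟪A w, u⟫ = ⟪w, A u⟫ := by
    intro w u
    rw [hAdef]
    simp only [ContinuousLinearMap.smul_apply, ContinuousLinearMap.add_apply]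
    rw [real_inner_smul_left, real_inner_smul_right, inner_add_left, inner_add_right]
    rw [ContinuousLinearMap.adjoint_inner_left, ContinuousLinearMap.adjoint_inner_right]
    ring
  have hAq : ∀ u : Euc n, ⟪A u, u⟫ = ⟪M u, u⟫ := by
    intro u
    rw [hAdef]
    simp only [ContinuousLinearMap.smul_apply, ContinuousLinearMap.add_apply]
    rw [real_inner_smul_left, inner_add_left, ContinuousLinearMap.adjoint_inner_left]
    rw [real_inner_comm u (M u)]
    ring
  refine ⟨v, A, hsym, ?_⟩
  rw [isLittleO_iff]
  intro C hC
  obtain ⟨δ, hδpos, hδ⟩ := htay C hC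
  rw [Metric.eventually_nhds_iff]
  refine ⟨δ, hδpos, fun y hy => ?_⟩
  rw [dist_eq_norm] at hy
  have h1 := hδ y hy
  have h2 : |‖y - x‖ ^ 2| = ‖y - x‖ ^ 2 := abs_of_nonneg (sq_nonneg _)
  rw [Real.norm_eq_abs, Real.norm_eq_abs, h2, hAq]
  exact h1

end
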